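/- For every even integer $m \ge 6$ and every $v_m > 0$, there exists $d > 0$ such that for all $v_0 \ge d\, v_m$, the polynomial $f(x_1,x_2,x_3) = v_0 x_1^m + v_0 x_3^m + v_m \sum \{ \binom{m}{t_1}\binom{m-t_1}{t_2} x_1^{t_1} x_2^{t_2} x_3^{m-t_1-t_2} : 2t_1 + t_2 = m,\ t_1, t_2 \ge 0 \}$ is nonnegative on $\mathbb{R}^3$. -/

import Mathlib

lemma my_choose_le_two_pow (n k : ℕ) : n.choose k ≤ 2 ^ n := by
  rcases le_or_gt k n with h | h
  · calc n.choose k ≤ ∑ i ∈ Finset.range (n + 1), n.choose i :=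
        Finset.single_le_sum (fun i _ => Nat.zero_le _) (Finset.mem_range.2 (by omega))
      _ = 2 ^ n := Nat.sum_range_choose n
  · rw [Nat.choose_eq_zero_of_lt h]; exact Nat.zero_le _

lemma my_young (B u w : ℝ) (k t : ℕ) (hB : 1 ≤ B) (hu : 0 ≤ u) (hw : 0 ≤ w)
    (ht1 : 1 ≤ t) (htk : t ≤ k) :
    u ^ t * w ^ (k - t) ≤ (1 / B) * w ^ k + B ^ k * u ^ k := by
  have hB0 : (0:ℝ) < B := lt_of_lt_of_le one_pos hB
  have hwk : (0:ℝ) ≤ w ^ k := pow_nonneg hw k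
  have huk : (0:ℝ) ≤ u ^ k := pow_nonneg hu k
  have hBk : (0:ℝ) ≤ B ^ k := pow_nonneg (le_of_lt hB0) k
  rcases le_or_gt u ((1 / B) * w) with h | h
  · have h1 : u ^ t * w ^ (k - t) ≤ ((1 / B) * w) ^ t * w ^ (k - t) :=
      mul_le_mul_of_nonneg_right (pow_le_pow_left₀ hu h t) (pow_nonneg hw _)
    have h2 : ((1 / B) * w) ^ t * w ^ (k - t) = (1 / B) ^ t * w ^ k := by
      rw [mul_pow, mul_assoc, ← pow_add]
      congr 2
      omega
    have h3 : (1 / B) ^ t ≤ 1 / B := by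
      calc (1 / B) ^ t ≤ (1 / B) ^ 1 :=
            pow_le_pow_of_le_one (by positivity) (by
              rw [div_le_one hB0]; exact hB) ht1
        _ = 1 / B := pow_one _
    have h4 : (1 / B) ^ t * w ^ k ≤ (1 / B) * w ^ k :=
      mul_le_mul_of_nonneg_right h3 hwk
    nlinarith [mul_nonneg hBk huk]
  · have hw' : w ≤ B * u := by
      rw [div_mul_eq_mul_div] at h
      have h2 := (div_lt_iff₀ hB0).mp h
      linarith
    have h1 : u ^ t * w ^ (k - t) ≤ u ^ t * (B * u) ^ (k - t) :=
      mul_le_mul_of_nonneg_left (pow_le_pow_left₀ hw hw' _) (pow_nonneg hu _)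
    have h2 : u ^ t * (B * u) ^ (k - t) = B ^ (k - t) * u ^ k := by
      rw [mul_pow, ← mul_assoc, mul_comm (u ^ t), mul_assoc, ← pow_add]
      congr 2
      omega
    have h3 : B ^ (k - t) ≤ B ^ k := pow_le_pow_right₀ hB (by omega)
    have h4 : B ^ (k - t) * u ^ k ≤ B ^ k * u ^ k :=
      mul_le_mul_of_nonneg_right h3 huk
    have h5 : 0 ≤ (1 / B) * w ^ k := by positivity
    linarith

set_option maxHeartbeats 1000000 in
theorem stmt_5 (m : ℕ) (hm : 6 ≤ m) (hme : Even m) (vm : ℝ) (hvm : 0 < vm) :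
    ∃ d : ℝ, 0 < d ∧ ∀ v0 : ℝ, d * vm ≤ v0 →
      ∀ x1 x2 x3 : ℝ,
        0 ≤ v0 * x1 ^ m + v0 * x3 ^ m +
            vm * ∑ t1 ∈ Finset.range (m / 2 + 1),
              (m.choose t1 : ℝ) * ((m - t1).choose (m - 2 * t1) : ℝ) *
                x1 ^ t1 * x2 ^ (m - 2 * t1) * x3 ^ t1 := by
  obtain ⟨k, hk⟩ := hme
  have hkm : m = 2 * k := by omega
  have hk3 : 3 ≤ k := by omega
  set B : ℝ := (m + 1 : ℝ) * 4 ^ m with hBdef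
  have hB1 : (1:ℝ) ≤ B := by
    have h4 : (1:ℝ) ≤ 4 ^ m := one_le_pow₀ (by norm_num)
    have hmc : (0:ℝ) ≤ (m:ℝ) := Nat.cast_nonneg m
    have : (1:ℝ) ≤ (m + 1 : ℝ) := by linarith
    nlinarith
  have hB0 : (0:ℝ) < B := lt_of_lt_of_le one_pos hB1
  refine ⟨B ^ (m + 1), by positivity, ?_⟩
  intro v0 hv0 x1 x2 x3
  have hdpos : (0:ℝ) < B ^ (m + 1) := by positivity
  have hv0pos : 0 < v0 := lt_of_lt_of_le (by positivity) hv0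
  set u : ℝ := (x1 ^ 2 + x3 ^ 2) / 2 with hudef
  have hu0 : 0 ≤ u := by positivity
  set w : ℝ := x2 ^ 2 with hwdef
  have hw0 : 0 ≤ w := sq_nonneg x2
  have hm2 : m / 2 = k := by omega
  -- key exponent facts
  have hx2m : w ^ k = x2 ^ m := by rw [hwdef, ← pow_mul, hkm]
  have hx1m : x1 ^ m = (x1 ^ 2) ^ k := by rw [hkm, pow_mul]
  have hx3m : x3 ^ m = (x3 ^ 2) ^ k := by rw [hkm, pow_mul]
  -- u^k ≤ x1^m + x3^m
  have hP : u ^ k ≤ x1 ^ m + x3 ^ m := by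
    rcases le_total (x1 ^ 2) (x3 ^ 2) with h | h
    · have h1 : u ≤ x3 ^ 2 := by rw [hudef]; linarith
      have := pow_le_pow_left₀ hu0 h1 k
      rw [hx1m, hx3m]
      have := pow_nonneg (sq_nonneg x1) k
      linarith
    · have h1 : u ≤ x1 ^ 2 := by rw [hudef]; linarith
      have := pow_le_pow_left₀ hu0 h1 k
      rw [hx1m, hx3m]
      have := pow_nonneg (sq_nonneg x3) k
      linarith
  -- per-term lower bound for t = i+1, i < k
  set C : ℝ := (4:ℝ) ^ m * ((1 / B) * w ^ k + B ^ k * u ^ k) with hCdef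
  have hC0 : 0 ≤ C := by positivity
  have hterm : ∀ i ∈ Finset.range k,
      -C ≤ (m.choose (i+1) : ℝ) * ((m - (i+1)).choose (m - 2 * (i+1)) : ℝ) *
            x1 ^ (i+1) * x2 ^ (m - 2 * (i+1)) * x3 ^ (i+1) := by
    intro i hi
    rw [Finset.mem_range] at hi
    set t := i + 1 with htdef
    have ht1 : 1 ≤ t := by omega
    have htk : t ≤ k := by omega
    have hexp : m - 2 * t = 2 * (k - t) := by omega
    set c : ℝ := (m.choose t : ℝ) * ((m - t).choose (m - 2 * t) : ℝ) with hcdef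
    have hc0 : 0 ≤ c := by positivity
    have hc4 : c ≤ (4:ℝ) ^ m := by
      have h1 : (m.choose t : ℝ) ≤ (2:ℝ) ^ m := by
        exact_mod_cast my_choose_le_two_pow m t
      have h2 : ((m - t).choose (m - 2 * t) : ℝ) ≤ (2:ℝ) ^ m := by
        have := my_choose_le_two_pow (m - t) (m - 2 * t)
        have h3 : (2:ℕ) ^ (m - t) ≤ 2 ^ m := Nat.pow_le_pow_right (by norm_num) (by omega)
        exact_mod_cast le_trans this h3
      have h1' : (0:ℝ) ≤ (m.choose t : ℝ) := by positivity
      have h2' : (0:ℝ) ≤ ((m - t).choose (m - 2 * t) : ℝ) := by positivity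
      calc c ≤ (2:ℝ) ^ m * (2:ℝ) ^ m := mul_le_mul h1 h2 h2' (by positivity)
        _ = (4:ℝ) ^ m := by rw [← mul_pow]; norm_num
    have hmono : c * x1 ^ t * x2 ^ (m - 2 * t) * x3 ^ t
        = c * ((x1 * x3) ^ t * w ^ (k - t)) := by
      rw [hexp, hwdef, pow_mul, ← pow_mul x2, mul_pow]
      ring
    have habs : |x1 * x3| ≤ u := by
      rw [hudef]
      have h := abs_mul x1 x3
      nlinarith [sq_nonneg (|x1| - |x3|), sq_abs x1, sq_abs x3, abs_nonneg x1, abs_nonneg x3]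
    have hlow : -(u ^ t) ≤ (x1 * x3) ^ t := by
      have h1 : -(|x1 * x3| ^ t) ≤ (x1 * x3) ^ t := by
        rw [← abs_pow]
        exact neg_abs_le _
      have h2 : |x1 * x3| ^ t ≤ u ^ t := pow_le_pow_left₀ (abs_nonneg _) habs t
      linarith
    have hyoung : u ^ t * w ^ (k - t) ≤ (1 / B) * w ^ k + B ^ k * u ^ k :=
      my_young B u w k t hB1 hu0 hw0 ht1 htk
    have hwkt : (0:ℝ) ≤ w ^ (k - t) := pow_nonneg hw0 _
    have step1 : -(u ^ t * w ^ (k - t)) ≤ (x1 * x3) ^ t * w ^ (k - t) := by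
      have := mul_le_mul_of_nonneg_right hlow hwkt
      linarith [this]
    have step2 : -C ≤ c * ((x1 * x3) ^ t * w ^ (k - t)) := by
      have hub : c * (u ^ t * w ^ (k - t)) ≤ C := by
        rw [hCdef]
        have h1 : (0:ℝ) ≤ u ^ t * w ^ (k - t) := mul_nonneg (pow_nonneg hu0 _) hwkt
        calc c * (u ^ t * w ^ (k - t)) ≤ (4:ℝ) ^ m * (u ^ t * w ^ (k - t)) :=
              mul_le_mul_of_nonneg_right hc4 h1
          _ ≤ (4:ℝ) ^ m * ((1 / B) * w ^ k + B ^ k * u ^ k) :=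
              mul_le_mul_of_nonneg_left hyoung (by positivity)
      nlinarith [mul_le_mul_of_nonneg_left step1 hc0]
    rw [hmono]
    exact step2
  -- split the sum
  have hsplit : ∑ t1 ∈ Finset.range (m / 2 + 1),
      (m.choose t1 : ℝ) * ((m - t1).choose (m - 2 * t1) : ℝ) *
        x1 ^ t1 * x2 ^ (m - 2 * t1) * x3 ^ t1
      = (∑ i ∈ Finset.range k,
          (m.choose (i+1) : ℝ) * ((m - (i+1)).choose (m - 2 * (i+1)) : ℝ) *
            x1 ^ (i+1) * x2 ^ (m - 2 * (i+1)) * x3 ^ (i+1)) + x2 ^ m := by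
    rw [hm2, Finset.sum_range_succ']
    congr 1
    simp
  have hsum : -(k : ℝ) * C ≤ ∑ i ∈ Finset.range k,
      (m.choose (i+1) : ℝ) * ((m - (i+1)).choose (m - 2 * (i+1)) : ℝ) *
        x1 ^ (i+1) * x2 ^ (m - 2 * (i+1)) * x3 ^ (i+1) := by
    have := Finset.sum_le_sum hterm
    simpa using this
  -- assemble
  have hS : x2 ^ m - (k : ℝ) * C ≤ ∑ t1 ∈ Finset.range (m / 2 + 1),
      (m.choose t1 : ℝ) * ((m - t1).choose (m - 2 * t1) : ℝ) *
        x1 ^ t1 * x2 ^ (m - 2 * t1) * x3 ^ t1 := by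
    rw [hsplit]; linarith
  have hcoef1 : (k : ℝ) * 4 ^ m * (1 / B) ≤ 1 := by
    rw [hBdef]
    rw [mul_one_div, div_le_one (by positivity)]
    have : (k : ℝ) ≤ (m : ℝ) + 1 := by
      have : (k:ℕ) ≤ m + 1 := by omega
      exact_mod_cast this
    nlinarith [pow_pos (show (0:ℝ) < 4 by norm_num) m]
  have hcoef2 : (k : ℝ) * 4 ^ m * B ^ k ≤ B ^ (m + 1) := by
    have h1 : (k : ℝ) * 4 ^ m ≤ B := by
      rw [hBdef]
      have : (k : ℝ) ≤ (m : ℝ) + 1 := by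
        have : (k:ℕ) ≤ m + 1 := by omega
        exact_mod_cast this
      nlinarith [pow_pos (show (0:ℝ) < 4 by norm_num) m]
    have h2 : B ^ (k + 1) ≤ B ^ (m + 1) := pow_le_pow_right₀ hB1 (by omega)
    calc (k : ℝ) * 4 ^ m * B ^ k ≤ B * B ^ k :=
          mul_le_mul_of_nonneg_right h1 (pow_nonneg (le_of_lt hB0) k)
      _ = B ^ (k + 1) := by rw [pow_succ]; ring
      _ ≤ B ^ (m + 1) := h2
  -- final
  have hx2m0 : (0:ℝ) ≤ x2 ^ m := by rw [← hx2m]; positivity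
  have huk0 : (0:ℝ) ≤ u ^ k := pow_nonneg hu0 k
  have hwk0 : (0:ℝ) ≤ w ^ k := pow_nonneg hw0 k
  have key1 : vm * ((k:ℝ) * C) ≤ vm * x2 ^ m + v0 * u ^ k := by
    have e1 : (k:ℝ) * C = ((k : ℝ) * 4 ^ m * (1 / B)) * w ^ k
        + ((k : ℝ) * 4 ^ m * B ^ k) * u ^ k := by rw [hCdef]; ring
    have b1 : ((k : ℝ) * 4 ^ m * (1 / B)) * w ^ k ≤ w ^ k :=
      le_trans (mul_le_mul_of_nonneg_right hcoef1 hwk0) (by linarith)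
    have b2 : ((k : ℝ) * 4 ^ m * B ^ k) * u ^ k ≤ B ^ (m + 1) * u ^ k :=
      mul_le_mul_of_nonneg_right hcoef2 huk0
    have b3 : vm * ((k:ℝ) * C) ≤ vm * (w ^ k + B ^ (m + 1) * u ^ k) := by
      apply mul_le_mul_of_nonneg_left _ (le_of_lt hvm)
      rw [e1]; linarith
    have b4 : vm * B ^ (m + 1) * u ^ k ≤ v0 * u ^ k := by
      apply mul_le_mul_of_nonneg_right _ huk0
      nlinarith
    rw [hx2m] at b3
    nlinarith
  have hmul : vm * (x2 ^ m - (k:ℝ) * C) ≤ vm * ∑ t1 ∈ Finset.range (m / 2 + 1),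
      (m.choose t1 : ℝ) * ((m - t1).choose (m - 2 * t1) : ℝ) *
        x1 ^ t1 * x2 ^ (m - 2 * t1) * x3 ^ t1 :=
    mul_le_mul_of_nonneg_left hS (le_of_lt hvm)
  have hv0P : v0 * u ^ k ≤ v0 * (x1 ^ m + x3 ^ m) :=
    mul_le_mul_of_nonneg_left hP (le_of_lt hv0pos)
  nlinarith [hmul, key1, hv0P]
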